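/- Let 𝒜 be a central arrangement in ℂⁿ with defining polynomial p = p₁⋯p_r, let m ≥ 1, and let c be an order-m differential operator with polynomial coefficients. Then c ∈ D^(m)(𝒜) if and only if c(x^β · p) ∈ ⟨p⟩ for every β ∈ ℕⁿ with |β| < m. -/

import Mathlib

open MvPolynomial

noncomputable section

/-- The polynomial ring `S = ℂ[x₁,…,xₙ]`. -/
abbrev S (n : ℕ) : Type := MvPolynomial (Fin n) ℂ

/-- The finite set of exponent vectors `α ∈ ℕⁿ` with `|α| = m`. -/
def degIdx (n m : ℕ) : Finset (Fin n → ℕ) :=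
  (Fintype.piFinset fun _ : Fin n => Finset.range (m + 1)).filter fun α => ∑ i, α i = m

/-- The differential operator `∂^α`, the composition of the partial derivatives
`∂/∂xᵢ` applied `αᵢ` times. -/
def pd {n : ℕ} (α : Fin n → ℕ) : Module.End ℂ (S n) :=
  (List.ofFn fun i : Fin n => ((pderiv (R := ℂ) i).toLinearMap) ^ (α i)).prod

/-- The action of an order-`m` differential operator with polynomial coefficients
`c = (c_α)_{|α| = m}` on a polynomial: `c(f) = Σ_{|α|=m} c_α ∂^α f`. -/
def applyOp {n m : ℕ} (c : degIdx n m → S n) (f : S n) : S n :=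
  ∑ α : degIdx n m, c α * pd (α : Fin n → ℕ) f

lemma applyOp_add {n m : ℕ} (a b : degIdx n m → S n) (f : S n) :
    applyOp (a + b) f = applyOp a f + applyOp b f := by
  simp [applyOp, add_mul, Finset.sum_add_distrib]

lemma applyOp_smul {n m : ℕ} (s : S n) (a : degIdx n m → S n) (f : S n) :
    applyOp (s • a) f = s * applyOp a f := by
  simp [applyOp, Finset.mul_sum, mul_assoc]

lemma applyOp_zero {n m : ℕ} (f : S n) : applyOp (0 : degIdx n m → S n) f = 0 := by
  simp [applyOp]

/-- `D^(m)(p)`: the `S`-module of order-`m` differential operators with polynomial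
coefficients preserving the principal ideal `⟨p⟩`. -/
def Dm {n : ℕ} (m : ℕ) (p : S n) : Submodule (S n) (degIdx n m → S n) where
  carrier := {c | ∀ f ∈ Ideal.span {p}, applyOp c f ∈ Ideal.span {p}}
  add_mem' := by
    intro a b ha hb f hf
    rw [applyOp_add]
    exact Ideal.add_mem _ (ha f hf) (hb f hf)
  zero_mem' := by
    intro f hf
    rw [applyOp_zero]
    exact Ideal.zero_mem _
  smul_mem' := by
    intro s c hc f hf
    rw [applyOp_smul]
    exact Ideal.mul_mem_left _ _ (hc f hf)

/-- A nonzero linear form. -/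
def IsLinearForm {n : ℕ} (q : S n) : Prop := q ≠ 0 ∧ q.IsHomogeneous 1

/-- The linear forms of an arrangement are pairwise non-proportional. -/
def PairwiseNonProportional {n r : ℕ} (p : Fin r → S n) : Prop :=
  ∀ i j : Fin r, i ≠ j → ∀ a : ℂ, p i ≠ a • p j


noncomputable section

namespace MemDmAux

lemma descFactorial_succ' (b k : ℕ) : b.descFactorial (k+1) = b * (b-1).descFactorial k := by
  cases b with
  | zero => simp
  | succ b => simpa using Nat.succ_descFactorial_succ b k

lemma pow_pderiv_monomial {n : ℕ} (i : Fin n) (k : ℕ) (s : Fin n →₀ ℕ) (a : ℂ) :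
    (((pderiv (R := ℂ) i).toLinearMap) ^ k) (monomial s a)
      = monomial (s - Finsupp.single i k) (a * (s i).descFactorial k) := by
  induction k generalizing s a with
  | zero => simp
  | succ k ih =>
      rw [pow_succ, Module.End.mul_apply]
      have h1 : ((pderiv (R := ℂ) i).toLinearMap) (monomial s a)
          = monomial (s - Finsupp.single i 1) (a * s i) := by simp [pderiv_monomial]
      rw [h1, ih]
      have he : s - Finsupp.single i 1 - Finsupp.single i k = s - Finsupp.single i (k+1) := by
        rw [tsub_tsub]
        congr 1
        rw [← Finsupp.single_add, add_comm]
      have hc : ((s - Finsupp.single i 1 : Fin n →₀ ℕ)) i = s i - 1 := by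
        rw [Finsupp.tsub_apply]
        simp [Finsupp.single_apply]
      rw [he, hc, descFactorial_succ']
      push_cast
      ring

lemma list_prod_pderiv_monomial {n : ℕ} :
    ∀ (l : List (Fin n × ℕ)), (l.map Prod.fst).Nodup →
    ∀ (s : Fin n →₀ ℕ) (a : ℂ),
    ((l.map fun q => ((pderiv (R := ℂ) q.1).toLinearMap) ^ q.2).prod) (monomial s a)
      = monomial (s - (l.map fun q => Finsupp.single q.1 q.2).sum)
          (a * ((l.map fun q => (s q.1).descFactorial q.2).prod : ℕ)) := by
  intro l
  induction l with
  | nil => intro _ s a; simp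
  | cons q l ih =>
      intro hnd s a
      rw [List.map_cons] at hnd
      rw [List.nodup_cons] at hnd
      simp only [List.map_cons, List.prod_cons, List.sum_cons, Module.End.mul_apply]
      rw [ih hnd.2 s a, pow_pderiv_monomial]
      have hkey : ((s - (l.map fun q => Finsupp.single q.1 q.2).sum : Fin n →₀ ℕ)) q.1 = s q.1 := by
        rw [Finsupp.tsub_apply]
        have : ((l.map fun q => Finsupp.single q.1 q.2).sum : Fin n →₀ ℕ) q.1 = 0 := by
          rw [← Finsupp.applyAddHom_apply, map_list_sum]
          apply List.sum_eq_zero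
          intro x hx
          simp only [List.map_map, List.mem_map] at hx
          obtain ⟨r, hr, rfl⟩ := hx
          simp only [Function.comp_apply, Finsupp.applyAddHom_apply]
          rw [Finsupp.single_apply]
          have : r.1 ≠ q.1 := by
            intro h
            exact hnd.1 (h ▸ List.mem_map_of_mem (f := Prod.fst) hr)
          simp only [ite_eq_right_iff]
          exact fun h => absurd h this
        simp [this]
      rw [hkey]
      congr 1
      · rw [tsub_tsub, add_comm]
      · push_cast; ring

def eSub {n : ℕ} (γ : Fin n → ℕ) : Fin n →₀ ℕ := ∑ i, Finsupp.single i (γ i)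

lemma eSub_apply {n : ℕ} (γ : Fin n → ℕ) (j : Fin n) : eSub γ j = γ j := by
  rw [eSub, ← Finsupp.applyAddHom_apply, map_sum]
  simp only [Finsupp.applyAddHom_apply]
  rw [Finset.sum_eq_single j]
  · simp
  · intro i _ hij; rw [Finsupp.single_apply]; simp [hij]
  · simp

lemma pd_monomial {n : ℕ} (γ : Fin n → ℕ) (s : Fin n →₀ ℕ) (a : ℂ) :
    pd γ (monomial s a)
      = monomial (s - eSub γ) (a * (∏ i, (s i).descFactorial (γ i) : ℕ)) := by
  have h := list_prod_pderiv_monomial (List.ofFn fun i : Fin n => (i, γ i)) ?_ s a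
  · rw [List.map_ofFn, List.map_ofFn, List.map_ofFn] at h
    rw [List.sum_ofFn, List.prod_ofFn] at h
    rw [pd, eSub]
    exact h
  · rw [List.map_ofFn]
    exact List.nodup_ofFn.2 (fun i j h => h)

lemma vandermonde_descFactorial (a b b' : ℕ) :
    ∑ j ∈ Finset.range (a+1), a.choose j * (b.descFactorial j * b'.descFactorial (a - j))
      = (b + b').descFactorial a := by
  rw [Nat.descFactorial_eq_factorial_mul_choose, Nat.add_choose_eq,
    Finset.Nat.sum_antidiagonal_eq_sum_range_succ_mk, Finset.mul_sum]
  apply Finset.sum_congr rfl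
  intro j hj
  rw [Finset.mem_range] at hj
  have hj' : j ≤ a := Nat.lt_succ_iff.mp hj
  rw [Nat.descFactorial_eq_factorial_mul_choose b, Nat.descFactorial_eq_factorial_mul_choose b']
  calc a.choose j * (j.factorial * b.choose j * ((a - j).factorial * b'.choose (a - j)))
      = (a.choose j * j.factorial * (a-j).factorial) * (b.choose j * b'.choose (a-j)) := by ring
    _ = a.factorial * (b.choose j * b'.choose (a - j)) := by
        rw [Nat.choose_mul_factorial_mul_factorial hj']

lemma pd_mul {n : ℕ} (α : Fin n → ℕ) (f g : S n) :
    pd α (f * g) = ∑ γ ∈ Fintype.piFinset (fun i => Finset.range (α i + 1)),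
      (∏ i, (α i).choose (γ i)) • (pd γ f * pd (fun i => α i - γ i) g) := by
  induction f using MvPolynomial.induction_on' generalizing g with
  | add f1 f2 h1 h2 =>
      simp only [add_mul, map_add, mul_add, smul_add, Finset.sum_add_distrib, h1, h2]
  | monomial s a =>
      induction g using MvPolynomial.induction_on' with
      | add g1 g2 h1 h2 =>
          simp only [mul_add, map_add, smul_add, Finset.sum_add_distrib, h1, h2]
      | monomial t b =>
          rw [monomial_mul, pd_monomial]
          have key : ∀ γ ∈ Fintype.piFinset (fun i => Finset.range (α i + 1)),
              (∏ i, (α i).choose (γ i)) • (pd γ (monomial s a) * pd (fun i => α i - γ i) (monomial t b))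
              = monomial (s + t - eSub α)
                  ((a * b) * ((∏ i, (α i).choose (γ i) * ((s i).descFactorial (γ i) * (t i).descFactorial (α i - γ i)) : ℕ) : ℂ)) := by
            intro γ hγ
            have hγle : ∀ i, γ i ≤ α i := fun i =>
              Nat.lt_succ_iff.mp (Finset.mem_range.mp (Fintype.mem_piFinset.mp hγ i))
            rw [pd_monomial, pd_monomial, monomial_mul]
            by_cases hz : (∏ i, (s i).descFactorial (γ i)) * (∏ i, (t i).descFactorial (α i - γ i)) = 0
            · have hc1 : (a * ((∏ i, (s i).descFactorial (γ i) : ℕ) : ℂ)) * (b * ((∏ i, (t i).descFactorial (α i - γ i) : ℕ) : ℂ)) = 0 := by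
                rcases Nat.mul_eq_zero.mp hz with h | h <;> rw [h] <;> push_cast <;> ring
              have hc2 : ((a * b) * ((∏ i, (α i).choose (γ i) * ((s i).descFactorial (γ i) * (t i).descFactorial (α i - γ i)) : ℕ) : ℂ)) = 0 := by
                have hq : (∏ i, (α i).choose (γ i) * ((s i).descFactorial (γ i) * (t i).descFactorial (α i - γ i))) = 0 := by
                  rcases Nat.mul_eq_zero.mp hz with h | h <;>
                    rcases Finset.prod_eq_zero_iff.mp h with ⟨i, _, hi⟩ <;>
                    exact Finset.prod_eq_zero (Finset.mem_univ i) (by rw [hi]; ring)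
                rw [hq]; push_cast; ring
              rw [hc1, hc2, map_zero, map_zero, smul_zero]
            · have hs : ∀ i, γ i ≤ s i := by
                intro i
                by_contra hlt
                exact hz (Or.inl (Finset.prod_eq_zero (Finset.mem_univ i)
                    (Nat.descFactorial_eq_zero_iff_lt.mpr (by omega))) |> Nat.mul_eq_zero.mpr)
              have ht : ∀ i, α i - γ i ≤ t i := by
                intro i
                by_contra hlt
                exact hz (Or.inr (Finset.prod_eq_zero (Finset.mem_univ i)
                    (Nat.descFactorial_eq_zero_iff_lt.mpr (by omega))) |> Nat.mul_eq_zero.mpr)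
              have hexp : (s - eSub γ) + (t - eSub (fun i => α i - γ i)) = s + t - eSub α := by
                ext j
                rw [Finsupp.add_apply, Finsupp.tsub_apply, Finsupp.tsub_apply, Finsupp.tsub_apply,
                  Finsupp.add_apply, eSub_apply, eSub_apply, eSub_apply]
                have := hs j; have := ht j; have := hγle j
                omega
              rw [hexp, ← map_nsmul]
              congr 1
              rw [nsmul_eq_mul]
              push_cast [Finset.prod_mul_distrib]
              ring
          rw [Finset.sum_congr rfl key, ← map_sum, ← Finset.mul_sum, ← Nat.cast_sum]
          congr 2
          norm_cast
          calc ∏ i, ((s + t) i).descFactorial (α i)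
              = ∏ i, ∑ j ∈ Finset.range (α i + 1),
                  (α i).choose j * ((s i).descFactorial j * (t i).descFactorial (α i - j)) := by
                apply Finset.prod_congr rfl
                intro i _
                rw [Finsupp.add_apply, ← vandermonde_descFactorial (α i) (s i) (t i)]
            _ = _ := Finset.prod_univ_sum _ _

lemma pd_zero_apply {n : ℕ} (f : S n) : pd (fun _ : Fin n => 0) f = f := by
  induction f using MvPolynomial.induction_on' with
  | add f1 f2 h1 h2 => rw [map_add, h1, h2]
  | monomial s a =>
      rw [pd_monomial]
      have h0 : eSub (fun _ : Fin n => 0) = 0 := by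
        ext j; rw [eSub_apply]; simp
      simp [h0]

lemma xpow_eq {n : ℕ} (β : Fin n → ℕ) : (∏ i, X i ^ β i : S n) = monomial (eSub β) 1 := by
  rw [eSub, monomial_sum_index, map_one, one_mul]
  simp [X_pow_eq_monomial]

/-- The "derived" coefficient family. -/
def md {n m : ℕ} (c : degIdx n m → S n) (p : S n) (γ : Fin n → ℕ) : S n :=
  ∑ α : degIdx n m, if ∀ i, γ i ≤ (α : Fin n → ℕ) i then
      (∏ i, ((α : Fin n → ℕ) i).choose (γ i)) • (c α * pd (fun i => (α : Fin n → ℕ) i - γ i) p) else 0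

lemma degIdx_le {n m : ℕ} {α : Fin n → ℕ} (hα : α ∈ degIdx n m) : (∀ i, α i ≤ m) ∧ ∑ i, α i = m := by
  rw [degIdx, Finset.mem_filter, Fintype.mem_piFinset] at hα
  exact ⟨fun i => Nat.lt_succ_iff.mp (Finset.mem_range.mp (hα.1 i)), hα.2⟩

lemma applyOp_mul_eq {n m : ℕ} (c : degIdx n m → S n) (p g : S n) :
    applyOp c (g * p) = ∑ γ ∈ Fintype.piFinset (fun _ : Fin n => Finset.range (m + 1)),
      md c p γ * pd γ g := by
  rw [applyOp]
  have step : ∀ α : degIdx n m, c α * pd (α : Fin n → ℕ) (g * p)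
      = ∑ γ ∈ Fintype.piFinset (fun _ : Fin n => Finset.range (m + 1)),
          (if ∀ i, γ i ≤ (α : Fin n → ℕ) i then
            (∏ i, ((α : Fin n → ℕ) i).choose (γ i)) • (c α * pd (fun i => (α : Fin n → ℕ) i - γ i) p) else 0) * pd γ g := by
    intro α
    rw [pd_mul]
    have hbox : Fintype.piFinset (fun i => Finset.range ((α : Fin n → ℕ) i + 1))
        = (Fintype.piFinset (fun _ : Fin n => Finset.range (m + 1))).filter
            (fun γ => ∀ i, γ i ≤ (α : Fin n → ℕ) i) := by
      have hαm := (degIdx_le α.2).1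
      ext γ
      simp only [Fintype.mem_piFinset, Finset.mem_filter, Finset.mem_range]
      constructor
      · intro h
        exact ⟨fun i => by have := h i; have := hαm i; omega, fun i => by have := h i; omega⟩
      · intro h i
        have := h.2 i; omega
    rw [hbox, Finset.mul_sum]
    simp only [ite_mul, zero_mul]
    rw [← Finset.sum_filter]
    apply Finset.sum_congr rfl
    intro γ hγ
    rw [mul_smul_comm, smul_mul_assoc]
    congr 1
    ring
  calc (∑ α : degIdx n m, c α * pd (α : Fin n → ℕ) (g * p))
      = ∑ α : degIdx n m, ∑ γ ∈ Fintype.piFinset (fun _ : Fin n => Finset.range (m + 1)),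
          (if ∀ i, γ i ≤ (α : Fin n → ℕ) i then
            (∏ i, ((α : Fin n → ℕ) i).choose (γ i)) • (c α * pd (fun i => (α : Fin n → ℕ) i - γ i) p) else 0) * pd γ g := by
        exact Finset.sum_congr rfl fun α _ => step α
    _ = _ := by
        rw [Finset.sum_comm]
        apply Finset.sum_congr rfl
        intro γ _
        rw [md, Finset.sum_mul]

lemma md_mem_ge {n m : ℕ} (c : degIdx n m → S n) (P : S n) (γ : Fin n → ℕ)
    (h : m ≤ ∑ i, γ i) : md c P γ ∈ Ideal.span {P} := by
  rw [md]
  apply Submodule.sum_mem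
  intro α _
  split_ifs with hc
  · have hle : ∑ i, γ i ≤ ∑ i, (α : Fin n → ℕ) i :=
      Finset.sum_le_sum fun i _ => hc i
    have hsum : (∑ i, (α : Fin n → ℕ) i) = m := (degIdx_le α.2).2
    have heq : ∀ i ∈ Finset.univ, γ i = (α : Fin n → ℕ) i :=
      (Finset.sum_eq_sum_iff_of_le (fun i _ => hc i)).mp (by omega)
    have hfe : γ = (α : Fin n → ℕ) := funext fun i => heq i (Finset.mem_univ i)
    have h0 : (fun i => (α : Fin n → ℕ) i - γ i) = fun _ : Fin n => 0 := by
      funext i; rw [hfe]; omega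
    rw [h0, pd_zero_apply]
    have hN : (∏ i, ((α : Fin n → ℕ) i).choose (γ i)) = 1 := by
      rw [hfe]; simp
    rw [hN, one_smul]
    exact Ideal.mul_mem_left _ _ (Ideal.mem_span_singleton_self P)
  · exact Submodule.zero_mem _

lemma md_mem_lt {n m : ℕ} (c : degIdx n m → S n) (P : S n)
    (H : ∀ β : Fin n → ℕ, (∑ i, β i) < m →
        applyOp c ((∏ i, X i ^ β i) * P) ∈ Ideal.span {P}) :
    ∀ k, ∀ γ : Fin n → ℕ, (∑ i, γ i) = k → k < m → md c P γ ∈ Ideal.span {P} := by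
  intro k
  induction k using Nat.strong_induction_on with
  | _ k IH =>
    intro γ hγk hkm
    have hγB : γ ∈ Fintype.piFinset (fun _ : Fin n => Finset.range (m + 1)) := by
      rw [Fintype.mem_piFinset]
      intro i
      rw [Finset.mem_range]
      have : γ i ≤ ∑ j, γ j := Finset.single_le_sum (fun j _ => Nat.zero_le _) (Finset.mem_univ i)
      omega
    have hB := H γ (by omega)
    rw [applyOp_mul_eq, xpow_eq, ← Finset.add_sum_erase _ _ hγB] at hB
    have hrest : ∑ δ ∈ (Fintype.piFinset (fun _ : Fin n => Finset.range (m + 1))).erase γ,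
        md c P δ * pd δ (monomial (eSub γ) 1) ∈ Ideal.span {P} := by
      apply Submodule.sum_mem
      intro δ hδ
      have hδγ : δ ≠ γ := (Finset.mem_erase.mp hδ).1
      by_cases hcase : ∀ i, δ i ≤ γ i
      · have hlt : ∑ i, δ i < k := by
          rw [← hγk]
          apply Finset.sum_lt_sum (fun i _ => hcase i)
          by_contra hno
          push_neg at hno
          exact hδγ (funext fun i => le_antisymm (hcase i) (hno i (Finset.mem_univ i)))
        exact Ideal.mul_mem_right _ _ (IH _ hlt δ rfl (by omega))
      · push_neg at hcase
        obtain ⟨i, hi⟩ := hcase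
        have hz : pd δ (monomial (eSub γ) 1) = 0 := by
          rw [pd_monomial]
          have hzero : (∏ j, ((eSub γ) j).descFactorial (δ j)) = 0 := by
            apply Finset.prod_eq_zero (Finset.mem_univ i)
            rw [eSub_apply]
            exact Nat.descFactorial_eq_zero_iff_lt.mpr hi
          rw [hzero]
          simp
        rw [hz, mul_zero]
        exact Submodule.zero_mem _
    have hmd : md c P γ * pd γ (monomial (eSub γ) 1) ∈ Ideal.span {P} := by
      have := Submodule.sub_mem _ hB hrest
      simpa using this
    have hpd : pd γ (monomial (eSub γ) 1) = C ((∏ i, (γ i).factorial : ℕ) : ℂ) := by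
      rw [pd_monomial, tsub_self, monomial_zero', one_mul]
      congr 1
      norm_cast
      exact Finset.prod_congr rfl fun i _ => by rw [eSub_apply, Nat.descFactorial_self]
    rw [hpd] at hmd
    have hne : ((∏ i, (γ i).factorial : ℕ) : ℂ) ≠ 0 := by
      norm_cast
      exact Finset.prod_ne_zero_iff.mpr fun i _ => Nat.factorial_ne_zero _
    have hrw : md c P γ = C (((∏ i, (γ i).factorial : ℕ) : ℂ))⁻¹ * (md c P γ * C ((∏ i, (γ i).factorial : ℕ) : ℂ)) := by
      rw [mul_comm (md c P γ), ← mul_assoc, ← C_mul, inv_mul_cancel₀ hne, C_1, one_mul]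
    rw [hrw]
    exact Ideal.mul_mem_left _ _ hmd

end MemDmAux

end

/-- For a central arrangement with defining polynomial `p = p₁⋯p_r`
and `m ≥ 1`, an order-`m` operator `c` lies in `D^(m)(𝒜)` iff `c(x^β · p) ∈ ⟨p⟩`
for every `β ∈ ℕⁿ` with `|β| < m`. -/
theorem mem_Dm_iff_monomial_multiples {n r m : ℕ} (hm : 1 ≤ m) (p : Fin r → S n)
    (hlin : ∀ i, IsLinearForm (p i)) (hnp : PairwiseNonProportional p)
    (c : degIdx n m → S n) :
    c ∈ Dm m (∏ i, p i) ↔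
      ∀ β : Fin n → ℕ, (∑ i, β i) < m →
        applyOp c ((∏ i, X i ^ β i) * ∏ j, p j) ∈ Ideal.span {∏ j, p j} := by
  constructor
  · intro hc β _
    exact hc _ (Ideal.mem_span_singleton.mpr (Dvd.intro_left _ rfl))
  · intro H f hf
    obtain ⟨g, hg⟩ := Ideal.mem_span_singleton'.mp hf
    rw [← hg, MemDmAux.applyOp_mul_eq]
    apply Submodule.sum_mem
    intro γ _
    apply Ideal.mul_mem_right
    rcases lt_or_ge (∑ i, γ i) m with h | h
    · exact MemDmAux.md_mem_lt c _ H _ γ rfl h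
    · exact MemDmAux.md_mem_ge c _ γ h
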